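/- Let t₁, …, t_k ∈ (0,1) with 1, t₁, …, t_k linearly independent over ℚ, and let z₀ ∈ (0,1), φ = 1/2 + z₀/2, z_n(t) = 2|frac(n t + φ) − 1/2|. Then z_n(0) = z₀ for every n, and for any prescribed heights h₁, …, h_k ∈ (0,1) and ε > 0 there exists n ∈ ℕ with |z_n(t_i) − h_i| < ε for all i. -/

import Mathlib

open Filter Finset Topology

noncomputable def ec (x : ℝ) : ℂ := Complex.exp (2 * Real.pi * Complex.I * x)

lemma ec_ne_zero (x : ℝ) : ec x ≠ 0 := Complex.exp_ne_zero _

lemma ec_add (x y : ℝ) : ec (x + y) = ec x * ec y := by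
  rw [ec, ec, ec, Complex.ofReal_add, mul_add, Complex.exp_add]

lemma ec_zero : ec 0 = 1 := by simp [ec]

lemma ec_zpow (x : ℝ) (m : ℤ) : ec (x * m) = (ec x) ^ m := by
  rw [ec, ec, ← Complex.exp_int_mul]
  congr 1
  push_cast
  ring

lemma ec_nat (x : ℝ) (n : ℕ) : ec (n * x) = (ec x) ^ n := by
  have := ec_zpow x n
  rw [zpow_natCast] at this
  rw [mul_comm]
  rw [← this]
  norm_num

lemma ec_sum {ι : Type*} (s : Finset ι) (f : ι → ℝ) :
    ec (∑ i ∈ s, f i) = ∏ i ∈ s, ec (f i) := by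
  rw [ec, Complex.ofReal_sum, Finset.mul_sum, Complex.exp_sum]
  rfl

lemma ec_norm (x : ℝ) : ‖ec x‖ = 1 := by
  rw [ec, Complex.norm_exp]
  have : (2 * Real.pi * Complex.I * x).re = 0 := by simp [Complex.mul_re]
  simp [this]

lemma ec_eq_one_iff (x : ℝ) : ec x = 1 ↔ ∃ m : ℤ, x = m := by
  rw [ec, Complex.exp_eq_one_iff]
  constructor
  · rintro ⟨n, hn⟩
    refine ⟨n, ?_⟩
    have h2 : (2 * (Real.pi:ℂ) * Complex.I) ≠ 0 := by
      simp [Real.pi_ne_zero, Complex.I_ne_zero]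
    have : (x : ℂ) = n := by
      apply mul_left_cancel₀ h2
      rw [hn]; ring
    exact_mod_cast this
  · rintro ⟨m, rfl⟩
    exact ⟨m, by push_cast; ring⟩

lemma cesaro {z : ℂ} (h1 : ‖z‖ = 1) (hz : z ≠ 1) :
    Tendsto (fun N : ℕ => (∑ n ∈ range N, z ^ n) / (N : ℂ)) atTop (𝓝 0) := by
  have hb : ∀ N : ℕ, ‖(∑ n ∈ range N, z ^ n) / (N : ℂ)‖ ≤ (2 / ‖z - 1‖) * (1 / N) := by
    intro N
    rw [norm_div, Complex.norm_natCast]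
    have h2 : ‖∑ n ∈ range N, z ^ n‖ ≤ 2 / ‖z - 1‖ := by
      rw [geom_sum_eq hz, norm_div]
      have : ‖z ^ N - 1‖ ≤ 2 := by
        calc ‖z ^ N - 1‖ ≤ ‖z ^ N‖ + ‖(1:ℂ)‖ := norm_sub_le _ _
        _ ≤ 2 := by rw [norm_pow, h1]; norm_num
      gcongr
    rw [div_eq_mul_inv, mul_one_div, div_eq_mul_inv]
    exact mul_le_mul_of_nonneg_right h2 (by positivity)
  refine squeeze_zero_norm hb ?_
  rw [show (0:ℝ) = (2 / ‖z - 1‖) * 0 by ring]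
  exact (tendsto_const_div_atTop_nhds_zero_nat 1).const_mul _

lemma cos_pow_expand (u : ℝ) (M : ℕ) :
    (4:ℂ) ^ M * ((Real.cos (Real.pi * u)) ^ 2 : ℝ) ^ M
      = ∑ j ∈ range (2 * M + 1), ((2 * M).choose j : ℂ) * (ec u) ^ ((j : ℤ) - M) := by
  set w : ℂ := Complex.exp (Real.pi * u * Complex.I) with hw
  have hw0 : w ≠ 0 := Complex.exp_ne_zero _
  have hv : ec u = w ^ 2 := by
    rw [ec, ← Complex.exp_nat_mul]
    congr 1
    push_cast; ring
  have hvinv : (ec u)⁻¹ = w⁻¹ ^ 2 := by rw [hv, inv_pow]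
  have hcos : ((Real.cos (Real.pi * u) : ℝ) : ℂ) = (w + w⁻¹) / 2 := by
    rw [Complex.ofReal_cos, Complex.cos]
    have e1 : (↑(Real.pi * u) : ℂ) * Complex.I = ↑Real.pi * ↑u * Complex.I := by
      push_cast; ring
    have e2 : -(↑(Real.pi * u) : ℂ) * Complex.I = -(↑Real.pi * ↑u * Complex.I) := by
      push_cast; ring
    rw [e1, e2, Complex.exp_neg]
  have hsq : (4:ℂ) * ((Real.cos (Real.pi * u)) ^ 2 : ℝ) = ec u + 2 + (ec u)⁻¹ := by
    rw [Complex.ofReal_pow, hcos, hv]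
    field_simp
    ring
  have key : (4:ℂ) ^ M * ((Real.cos (Real.pi * u)) ^ 2 : ℝ) ^ M
      = (ec u + 1) ^ (2 * M) * ((ec u)⁻¹) ^ M := by
    have h0 : (4:ℂ) ^ M * ((Real.cos (Real.pi * u)) ^ 2 : ℝ) ^ M
        = ((4:ℂ) * ((Real.cos (Real.pi * u)) ^ 2 : ℝ)) ^ M := by
      rw [mul_pow]
    rw [h0, hsq]
    have h2 : ec u + 2 + (ec u)⁻¹ = (ec u + 1) ^ 2 * (ec u)⁻¹ := by
      field_simp [ec_ne_zero]
      ring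
    rw [h2, mul_pow, ← pow_mul]
  rw [key, add_pow, Finset.sum_mul]
  refine Finset.sum_congr rfl fun j hj => ?_
  rw [mem_range] at hj
  have hzp : (ec u) ^ ((j : ℤ) - M) = (ec u) ^ j * ((ec u) ^ M)⁻¹ := by
    rw [zpow_sub₀ (ec_ne_zero u), zpow_natCast, zpow_natCast]
    rfl
  rw [hzp, ← inv_pow]
  ring

lemma kron {k : ℕ} (t α : Fin k → ℝ)
    (hind : ∀ m : Fin k → ℤ, m ≠ 0 → ec (∑ i, (m i : ℝ) * t i) ≠ 1)
    {ρ : ℝ} (hρ0 : 0 ≤ ρ) (hρ1 : ρ < 1) :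
    ∃ n : ℕ, ∀ i, ρ < Real.cos (Real.pi * ((n : ℝ) * t i - α i)) ^ 2 := by
  by_contra hcon
  push_neg at hcon
  -- choose M with (2M+1)^k * ρ^M < 1 and 1 ≤ M
  obtain ⟨M, hM1, hM⟩ : ∃ M : ℕ, 1 ≤ M ∧ ((2 * M + 1 : ℝ)) ^ k * ρ ^ M < 1 := by
    have h3 : Tendsto (fun M : ℕ => ((M : ℝ)) ^ k * ρ ^ M) atTop (𝓝 0) :=
      tendsto_pow_const_mul_const_pow_of_abs_lt_one k (by rwa [abs_of_nonneg hρ0])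
    have hb : (0:ℝ) < ((3:ℝ) ^ k)⁻¹ := by positivity
    have h4 := h3.eventually (gt_mem_nhds hb)
    obtain ⟨M, hM1, hM2⟩ := ((h4.and (eventually_ge_atTop 1)).exists)
    refine ⟨M, hM2, ?_⟩
    have hle : ((2 * M + 1 : ℝ)) ^ k ≤ (3:ℝ) ^ k * (M:ℝ) ^ k := by
      rw [← mul_pow]
      apply pow_le_pow_left₀ (by positivity)
      have : (1:ℝ) ≤ (M:ℝ) := by exact_mod_cast hM2
      nlinarith
    calc ((2 * M + 1 : ℝ)) ^ k * ρ ^ M ≤ ((3:ℝ) ^ k * (M:ℝ) ^ k) * ρ ^ M := by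
          apply mul_le_mul_of_nonneg_right hle (by positivity)
      _ = (3:ℝ) ^ k * ((M:ℝ) ^ k * ρ ^ M) := by ring
      _ < (3:ℝ) ^ k * ((3:ℝ) ^ k)⁻¹ := by
          apply mul_lt_mul_of_pos_left hM1 (by positivity)
      _ = 1 := by field_simp
  set c : ℕ → Fin k → ℝ := fun n i => Real.cos (Real.pi * ((n : ℝ) * t i - α i)) ^ 2 with hc
  have hc0 : ∀ n i, 0 ≤ c n i := fun n i => sq_nonneg _
  have hc1 : ∀ n i, c n i ≤ 1 := fun n i => Real.cos_sq_le_one _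
  set P : ℕ → ℝ := fun n => ∏ i, (c n i) ^ M with hPdef
  have hP0 : ∀ n, 0 ≤ P n := fun n => Finset.prod_nonneg fun i _ => pow_nonneg (hc0 n i) M
  have hPρ : ∀ n, P n ≤ ρ ^ M := by
    intro n
    obtain ⟨i₀, hi₀⟩ := hcon n
    have h1 : P n ≤ (c n i₀) ^ M := by
      rw [hPdef]
      simp only
      rw [← Finset.mul_prod_erase univ _ (mem_univ i₀)]
      have h2 : ∏ i ∈ univ.erase i₀, (c n i) ^ M ≤ 1 :=
        Finset.prod_le_one (fun i _ => pow_nonneg (hc0 n i) M)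
          (fun i _ => pow_le_one₀ (hc0 n i) (hc1 n i))
      nlinarith [pow_nonneg (hc0 n i₀) M]
    exact h1.trans (pow_le_pow_left₀ (hc0 n i₀) hi₀ M)
  -- Fourier expansion
  set G := Fintype.piFinset (fun _ : Fin k => Finset.range (2 * M + 1)) with hG
  set m : (Fin k → ℕ) → Fin k → ℤ := fun g i => (g i : ℤ) - M with hm
  set θ : (Fin k → ℕ) → ℝ := fun g => ∑ i, ((m g i : ℝ)) * t i with hθ
  set β : (Fin k → ℕ) → ℝ := fun g => -∑ i, α i * (m g i : ℝ) with hβ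
  set W : (Fin k → ℕ) → ℂ := fun g => ∏ i, ((2 * M).choose (g i) : ℂ) with hW
  have stepA : ∀ n : ℕ, (4:ℂ) ^ (M * k) * (P n : ℝ) =
      ∑ g ∈ G, (W g * ec (β g)) * (ec (θ g)) ^ n := by
    intro n
    have e1 : (4:ℂ) ^ (M * k) * ((P n : ℝ) : ℂ)
        = ∏ i, ((4:ℂ) ^ M * ((c n i : ℝ) : ℂ) ^ M) := by
      rw [Finset.prod_mul_distrib, Finset.prod_const, Finset.card_univ, Fintype.card_fin,
        ← pow_mul]
      congr 1
      push_cast [hPdef]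
      norm_num
    rw [e1]
    have e2 : ∀ i : Fin k, (4:ℂ) ^ M * ((c n i : ℝ) : ℂ) ^ M
        = ∑ j ∈ Finset.range (2 * M + 1),
            ((2 * M).choose j : ℂ) * (ec ((n : ℝ) * t i - α i)) ^ ((j : ℤ) - M) := by
      intro i
      have := cos_pow_expand ((n : ℝ) * t i - α i) M
      rw [← this]
    rw [Finset.prod_congr rfl fun i _ => e2 i, Finset.prod_univ_sum]
    refine Finset.sum_congr rfl fun g hg => ?_
    rw [Finset.prod_mul_distrib]
    have e3 : ∏ i, (ec ((n : ℝ) * t i - α i)) ^ ((g i : ℤ) - M)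
        = (ec (θ g)) ^ n * ec (β g) := by
      have e4 : ∀ i : Fin k, (ec ((n : ℝ) * t i - α i)) ^ ((g i : ℤ) - M)
          = ec (((n : ℝ) * t i - α i) * ((m g i : ℤ) : ℝ)) := by
        intro i
        rw [ec_zpow]
      rw [Finset.prod_congr rfl fun i _ => e4 i, ← ec_sum]
      have e5 : ∑ i, ((n : ℝ) * t i - α i) * ((m g i : ℤ) : ℝ)
          = (n : ℝ) * θ g + β g := by
        rw [hθ, hβ]
        simp only [Finset.mul_sum, ← Finset.sum_neg_distrib, ← Finset.sum_add_distrib]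
        exact Finset.sum_congr rfl fun i _ => by ring
      rw [e5, ec_add, ec_nat]
    rw [e3, hW]
    ring
  -- the Cesàro averages
  set Q : ℕ → ℂ := fun N =>
    ∑ g ∈ G, (W g * ec (β g)) * ((∑ n ∈ range N, (ec (θ g)) ^ n) / N) with hQdef
  have stepB : ∀ N : ℕ, (4:ℂ) ^ (M * k) * ((∑ n ∈ range N, P n : ℝ) : ℂ) / N = Q N := by
    intro N
    rw [hQdef]
    simp only
    push_cast
    rw [Finset.mul_sum, Finset.sum_congr rfl fun n _ => stepA n, Finset.sum_comm,
      Finset.sum_div]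
    refine Finset.sum_congr rfl fun g hg => ?_
    rw [← Finset.mul_sum, mul_div_assoc]
  -- limit of Q
  have hMmem : (fun _ : Fin k => M) ∈ G := by
    rw [hG, Fintype.mem_piFinset]
    intro i
    rw [mem_range]
    omega
  have stepC : Tendsto Q atTop (𝓝 (((2 * M).choose M : ℂ) ^ k)) := by
    have hlim : ∀ g ∈ G, Tendsto
        (fun N : ℕ => (W g * ec (β g)) * ((∑ n ∈ range N, (ec (θ g)) ^ n) / N)) atTop
        (𝓝 (if g = (fun _ => M) then ((2 * M).choose M : ℂ) ^ k else 0)) := by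
      intro g hg
      by_cases hgM : g = (fun _ => M)
      · subst hgM
        rw [if_pos rfl]
        have hθ0 : θ (fun _ => M) = 0 := by
          rw [hθ]
          simp [hm]
        have hβ0 : β (fun _ => M) = 0 := by
          rw [hβ]
          simp [hm]
        have hW0 : W (fun _ => M) = ((2 * M).choose M : ℂ) ^ k := by
          rw [hW]
          simp
        rw [hθ0, hβ0, hW0, ec_zero]
        refine Tendsto.congr' ?_ tendsto_const_nhds
        filter_upwards [eventually_ge_atTop 1] with N hN
        have hN0 : (N : ℂ) ≠ 0 := Nat.cast_ne_zero.mpr (by omega)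
        simp [Finset.sum_const, hN0]
      · rw [if_neg hgM]
        have hm0 : m g ≠ 0 := by
          intro h0
          apply hgM
          funext i
          have := congrFun h0 i
          rw [hm] at this
          simp only [Pi.zero_apply] at this
          omega
        have hne : ec (θ g) ≠ 1 := by
          rw [hθ]
          exact hind (m g) hm0
        have := cesaro (ec_norm (θ g)) hne
        have h2 := this.const_mul (W g * ec (β g))
        rw [mul_zero] at h2
        exact h2
    have h3 := tendsto_finset_sum G hlim
    rw [Finset.sum_ite_eq' G (fun _ => M) (fun _ => ((2 * M).choose M : ℂ) ^ k)] at h3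
    rw [if_pos hMmem] at h3
    exact h3.congr fun N => rfl
  -- norm bound
  have hnorm : ∀ᶠ N : ℕ in atTop,
      ‖(4:ℂ) ^ (M * k) * ((∑ n ∈ range N, P n : ℝ) : ℂ) / N‖ ≤ (4:ℝ) ^ (M * k) * ρ ^ M := by
    filter_upwards [eventually_ge_atTop 1] with N hN
    rw [norm_div, norm_mul]
    have h1 : ‖((∑ n ∈ range N, P n : ℝ) : ℂ)‖ ≤ N * ρ ^ M := by
      rw [Complex.norm_real, Real.norm_eq_abs, abs_of_nonneg (Finset.sum_nonneg fun n _ => hP0 n)]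
      calc ∑ n ∈ range N, P n ≤ ∑ n ∈ range N, ρ ^ M :=
            Finset.sum_le_sum fun n _ => hPρ n
        _ = N * ρ ^ M := by rw [Finset.sum_const, card_range, nsmul_eq_mul]
    have h2 : ‖(4:ℂ) ^ (M * k)‖ = (4:ℝ) ^ (M * k) := by
      rw [norm_pow]
      norm_num
    have hN0 : (0:ℝ) < (N:ℝ) := by exact_mod_cast Nat.pos_of_ne_zero (by omega)
    rw [h2, Complex.norm_natCast]
    rw [div_le_iff₀ hN0]
    calc (4:ℝ) ^ (M * k) * ‖((∑ n ∈ range N, P n : ℝ) : ℂ)‖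
        ≤ (4:ℝ) ^ (M * k) * ((N:ℝ) * ρ ^ M) := by
          apply mul_le_mul_of_nonneg_left h1 (by positivity)
      _ = (4:ℝ) ^ (M * k) * ρ ^ M * (N:ℝ) := by ring
  -- conclude
  have hlim2 : Tendsto (fun N : ℕ => (4:ℂ) ^ (M * k) * ((∑ n ∈ range N, P n : ℝ) : ℂ) / N)
      atTop (𝓝 (((2 * M).choose M : ℂ) ^ k)) := by
    refine stepC.congr' ?_
    filter_upwards with N
    rw [stepB]
  have hnormlim := hlim2.norm
  have hfinal : ‖((2 * M).choose M : ℂ) ^ k‖ ≤ (4:ℝ) ^ (M * k) * ρ ^ M :=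
    le_of_tendsto hnormlim hnorm
  rw [norm_pow, Complex.norm_natCast] at hfinal
  set Cr : ℝ := ((2 * M).choose M : ℝ) with hCr
  have hC1 : (1:ℝ) ≤ Cr := by
    rw [hCr]
    exact_mod_cast Nat.one_le_iff_ne_zero.mpr (Nat.choose_pos (by omega)).ne'
  have h4C : (4:ℝ) ^ (M * k) ≤ ((2 * M + 1 : ℝ)) ^ k * Cr ^ k := by
    rw [pow_mul, ← mul_pow]
    apply pow_le_pow_left₀ (by positivity)
    have := Nat.four_pow_le_two_mul_add_one_mul_central_binom M
    rw [hCr]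
    exact_mod_cast this
  have hCk : (0:ℝ) < Cr ^ k := by positivity
  have : Cr ^ k ≤ (((2 * M + 1 : ℝ)) ^ k * ρ ^ M) * Cr ^ k := by
    calc Cr ^ k ≤ (4:ℝ) ^ (M * k) * ρ ^ M := hfinal
      _ ≤ (((2 * M + 1 : ℝ)) ^ k * Cr ^ k) * ρ ^ M := by
          apply mul_le_mul_of_nonneg_right h4C (by positivity)
      _ = (((2 * M + 1 : ℝ)) ^ k * ρ ^ M) * Cr ^ k := by ring
  have h1le : (1:ℝ) ≤ ((2 * M + 1 : ℝ)) ^ k * ρ ^ M := by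
    nlinarith
  linarith

lemma near_int_of_cos_sq {u ε : ℝ} (hε0 : 0 < ε) (hε2 : ε ≤ 1/2)
    (h : Real.cos (Real.pi * ε) ^ 2 < Real.cos (Real.pi * u) ^ 2) :
    ∃ j : ℤ, |u - j| < ε := by
  refine ⟨round u, ?_⟩
  by_contra hc
  push_neg at hc
  set v := u - (round u : ℝ) with hv
  have hv2 : |v| ≤ 1/2 := abs_sub_round u
  have hpi := Real.pi_pos
  have hcos2u : Real.cos (2*Real.pi*u) = Real.cos (2*Real.pi*|v|) := by
    have h1 : 2*Real.pi*u = 2*Real.pi*v + (round u : ℝ) * (2*Real.pi) := by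
      rw [hv]; ring
    rw [h1]
    rw [show ((round u : ℝ)) * (2*Real.pi) = ((round u : ℤ) : ℝ) * (2*Real.pi) by norm_num]
    rw [Real.cos_add_int_mul_two_pi]
    rcases abs_cases v with ⟨hh,_⟩|⟨hh,_⟩
    · rw [hh]
    · rw [hh, show 2*Real.pi*(-v) = -(2*Real.pi*v) by ring, Real.cos_neg]
  have hmono : Real.cos (2*Real.pi*|v|) ≤ Real.cos (2*Real.pi*ε) := by
    apply Real.cos_le_cos_of_nonneg_of_le_pi (by positivity) (by nlinarith) (by nlinarith)
  have e1 : Real.cos (Real.pi*u)^2 = 1/2 + Real.cos (2*Real.pi*u)/2 := by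
    rw [Real.cos_sq, show 2*(Real.pi*u) = 2*Real.pi*u by ring]
  have e2 : Real.cos (Real.pi*ε)^2 = 1/2 + Real.cos (2*Real.pi*ε)/2 := by
    rw [Real.cos_sq, show 2*(Real.pi*ε) = 2*Real.pi*ε by ring]
  rw [e1, e2] at h
  linarith

lemma fract_near {x y ε : ℝ} (j : ℤ) (hy0 : ε ≤ y) (hy1 : ε ≤ 1 - y)
    (h : |x - y - j| < ε) : |Int.fract x - y| < ε := by
  rw [abs_lt] at h
  have hfl : ⌊x⌋ = j := by
    rw [Int.floor_eq_iff]
    constructor <;> [skip; push_cast] <;> nlinarith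
  rw [Int.fract, hfl, abs_lt]
  constructor <;> linarith

lemma indep_ec {k : ℕ} {t : Fin k → ℝ}
    (hli : LinearIndependent ℚ (Fin.cons 1 t : Fin (k + 1) → ℝ)) :
    ∀ m : Fin k → ℤ, m ≠ 0 → ec (∑ i, (m i : ℝ) * t i) ≠ 1 := by
  intro m hm h1
  rw [ec_eq_one_iff] at h1
  obtain ⟨c, hc⟩ := h1
  rw [Fintype.linearIndependent_iff] at hli
  set g : Fin (k+1) → ℚ := Fin.cons (-(c:ℚ)) (fun i => (m i : ℚ)) with hg
  have h0 : ∑ i, g i • (Fin.cons 1 t : Fin (k+1) → ℝ) i = 0 := by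
    rw [Fin.sum_univ_succ]
    simp only [hg, Fin.cons_zero, Fin.cons_succ]
    simp only [Rat.smul_def]
    push_cast
    rw [hc]
    ring
  have := hli g h0
  obtain ⟨i, hi⟩ := Function.ne_iff.mp hm
  have h2 := this i.succ
  rw [hg, Fin.cons_succ] at h2
  exact hi (by exact_mod_cast h2)

/-- With `φ = 1/2 + z₀/2` and `z_n(t) = 2|fract(n t + φ) - 1/2|`, one has
`z_n(0) = z₀` for all `n`, and if `1, t₁, …, t_k` are `ℚ`-linearly independent with
`t_i ∈ (0,1)`, the heights `z_n(t_i)` approximate any targets `h_i ∈ (0,1)`. -/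
theorem heights_with_base {k : ℕ} (t : Fin k → ℝ) (ht : ∀ i, t i ∈ Set.Ioo (0 : ℝ) 1)
    (hli : LinearIndependent ℚ (Fin.cons 1 t : Fin (k + 1) → ℝ))
    (z₀ : ℝ) (hz₀ : z₀ ∈ Set.Ioo (0 : ℝ) 1) (φ : ℝ) (hφ : φ = 1 / 2 + z₀ / 2)
    (z : ℕ → ℝ → ℝ)
    (hz : ∀ n t', z n t' = 2 * |Int.fract ((n : ℝ) * t' + φ) - 1 / 2|) :
    (∀ n : ℕ, z n 0 = z₀) ∧
    ∀ (h : Fin k → ℝ), (∀ i, h i ∈ Set.Ioo (0 : ℝ) 1) →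
      ∀ ε > 0, ∃ n : ℕ, ∀ i, |z n (t i) - h i| < ε := by
  obtain ⟨hz₀0, hz₀1⟩ := hz₀
  constructor
  · intro n
    rw [hz]
    have hfr : Int.fract ((n : ℝ) * 0 + φ) = φ := by
      rw [mul_zero, zero_add]
      rw [Int.fract_eq_self]
      constructor <;> [linarith [hφ]; linarith [hφ]]
    rw [hfr, hφ]
    rw [abs_of_nonneg (by linarith)]
    ring
  · intro h hh ε hε
    rcases isEmpty_or_nonempty (Fin k) with hk | hk
    · exact ⟨0, fun i => isEmptyElim i⟩
    have hne : (Finset.univ : Finset (Fin k)).Nonempty := Finset.univ_nonempty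
    set y : Fin k → ℝ := fun i => 1/2 + h i / 2 with hy
    set ε' : ℝ := min (ε/2) (Finset.univ.inf' hne fun i => (1 - h i)/2) with hε'
    have hε'0 : 0 < ε' := by
      apply lt_min (by linarith)
      rw [Finset.lt_inf'_iff]
      intro i _
      have := (hh i).2
      linarith
    have hε'half : ε' ≤ 1/2 := by
      obtain ⟨i₀⟩ := hk
      have h1 : ε' ≤ (1 - h i₀)/2 :=
        (min_le_right _ _).trans (Finset.inf'_le _ (Finset.mem_univ i₀))
      have := (hh i₀).1
      linarith
    have hπ := Real.pi_pos
    -- ρ < 1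
    have hρ1 : Real.cos (Real.pi * ε') ^ 2 < 1 := by
      have hcn : 0 ≤ Real.cos (Real.pi * ε') := by
        apply Real.cos_nonneg_of_mem_Icc
        constructor <;> nlinarith
      have hlt : Real.cos (Real.pi * ε') < 1 := by
        have hmem1 : (0:ℝ) ∈ Set.Icc (0:ℝ) Real.pi := Set.mem_Icc.mpr ⟨le_refl 0, hπ.le⟩
        have hmem2 : Real.pi * ε' ∈ Set.Icc (0:ℝ) Real.pi :=
          Set.mem_Icc.mpr ⟨by positivity, by nlinarith⟩
        have hlt0 : (0:ℝ) < Real.pi * ε' := by positivity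
        have := Real.strictAntiOn_cos hmem1 hmem2 hlt0
        rwa [Real.cos_zero] at this
      nlinarith
    obtain ⟨n, hn⟩ := kron t (fun i => y i - φ) (indep_ec hli) (sq_nonneg _) hρ1
    refine ⟨n, fun i => ?_⟩
    obtain ⟨j, hj⟩ := near_int_of_cos_sq hε'0 hε'half (hn i)
    have hyi0 : ε' ≤ y i := by
      have := (hh i).1
      rw [hy]
      simp only
      linarith
    have hyi1 : ε' ≤ 1 - y i := by
      have h1 : ε' ≤ (1 - h i)/2 :=
        (min_le_right _ _).trans (Finset.inf'_le _ (Finset.mem_univ i))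
      rw [hy]
      simp only
      linarith
    have hfr : |Int.fract ((n : ℝ) * t i + φ) - y i| < ε' := by
      apply fract_near j hyi0 hyi1
      have : (n : ℝ) * t i + φ - y i - j = (n : ℝ) * t i - (y i - φ) - j := by ring
      rw [this]
      exact hj
    have hzi : z n (t i) = 2 * |Int.fract ((n : ℝ) * t i + φ) - 1/2| := hz n (t i)
    have hhi : h i = 2 * |y i - 1/2| := by
      rw [hy, abs_of_nonneg (by have := (hh i).1; simp only; linarith)]
      ring
    rw [hzi, hhi]
    have key := abs_abs_sub_abs_le_abs_sub (Int.fract ((n : ℝ) * t i + φ) - 1/2) (y i - 1/2)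
    have h2 : Int.fract ((n : ℝ) * t i + φ) - 1/2 - (y i - 1/2)
        = Int.fract ((n : ℝ) * t i + φ) - y i := by ring
    rw [h2, abs_le] at key
    have hmin : ε' ≤ ε/2 := min_le_left _ _
    rw [abs_lt]
    constructor <;> linarith [key.1, key.2, hfr]
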